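/- (Theorem 1, min-circuit.) Let 0 < R_ON < R_OFF < R, let 0 ≤ Y ≤ X ≤ 1, and suppose the memristances M₁, M₂ : ℝ → ℝ of the min-circuit take values in [R_ON, R_OFF] and satisfy M₁(t) → R_OFF and M₂(t) → R_ON as t → ∞. Then the output voltage Z'(t) = (X·M₂(t) + Y·M₁(t))/(M₁(t) + M₂(t) + M₁(t)M₂(t)/R) converges as t → ∞ to a limit L with |L − min(X,Y)| ≤ R_ON/R_OFF + R_ON/R; in particular, when R ≫ R_OFF ≫ R_ON the circuit computes min(X,Y) up to an arbitrarily small error. -/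

import Mathlib

/-- Theorem 1, min-circuit: the output voltage Z'(t) converges to
a limit L with |L − min(X,Y)| ≤ R_ON/R_OFF + R_ON/R. -/
theorem memristor_min_circuit_computes_min
    (RON ROFF R X Y : ℝ)
    (hON : 0 < RON) (hONOFF : RON < ROFF) (hOFFR : ROFF < R)
    (hY : 0 ≤ Y) (hYX : Y ≤ X) (hX : X ≤ 1)
    (M₁ M₂ : ℝ → ℝ)
    (hM₁mem : ∀ t, M₁ t ∈ Set.Icc RON ROFF)
    (hM₂mem : ∀ t, M₂ t ∈ Set.Icc RON ROFF)
    (hM₁ : Filter.Tendsto M₁ Filter.atTop (nhds ROFF))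
    (hM₂ : Filter.Tendsto M₂ Filter.atTop (nhds RON)) :
    ∃ L : ℝ,
      Filter.Tendsto
        (fun t => (X * M₂ t + Y * M₁ t) / (M₁ t + M₂ t + M₁ t * M₂ t / R))
        Filter.atTop (nhds L) ∧
      |L - min X Y| ≤ RON / ROFF + RON / R := by
  have hR : 0 < R := lt_trans (lt_trans hON hONOFF) hOFFR
  have hOFF : 0 < ROFF := lt_trans hON hONOFF
  have hD : 0 < ROFF + RON + ROFF * RON / R := by positivity
  refine ⟨(X * RON + Y * ROFF) / (ROFF + RON + ROFF * RON / R), ?_, ?_⟩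
  · exact Filter.Tendsto.div
      ((hM₂.const_mul X).add (hM₁.const_mul Y))
      ((hM₁.add hM₂).add ((hM₁.mul hM₂).div_const R)) hD.ne'
  · rw [min_eq_right hYX, abs_le]
    have hRne := hR.ne'
    have hOFFne := hOFF.ne'
    have hDne := hD.ne'
    have hY1 : Y ≤ 1 := le_trans hYX hX
    have hA : 0 ≤ (1 - Y) * (ROFF * ROFF * RON * R) :=
      mul_nonneg (by linarith) (by positivity)
    have hB : 0 ≤ (X - Y) * (RON * ROFF * R * R) :=
      mul_nonneg (by linarith) (by positivity)
    have hE : (X - Y) * (RON * ROFF * R * R) ≤ RON * ROFF * R * R := by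
      nlinarith [mul_pos (mul_pos (mul_pos hON hOFF) hR) hR]
    constructor
    · rw [le_sub_iff_add_le, le_div_iff₀ hD]
      field_simp
      nlinarith [hA, hB, mul_pos (mul_pos hON hR) hR,
        mul_pos (mul_pos (mul_pos hON hON) hOFF) hOFF,
        mul_pos (mul_pos (mul_pos hON hON) hOFF) hR,
        mul_pos (mul_pos (mul_pos hON hON) hR) hR]
    · rw [sub_le_iff_le_add, div_le_iff₀ hD]
      field_simp
      nlinarith [hA, hE, mul_nonneg (mul_nonneg (mul_nonneg hY hOFF.le) (mul_pos hOFF hON).le) hR.le,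
        mul_pos (mul_pos (mul_pos hON hON) hOFF) hOFF,
        mul_pos (mul_pos (mul_pos hON hON) hOFF) hR,
        mul_pos (mul_pos (mul_pos hON hON) hR) hR,
        mul_pos (mul_pos (mul_pos hON hOFF) hOFF) hR]
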